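/- Let B ∼ Binomial(n-1, p) with p ∈ (0,1] and n ≥ 1. Then E[(1+B)^{-3/2}] ≤ √2 · (np)^{-3/2}. -/

import Mathlib

open Finset

private lemma bnm_rpow_neg_three_half (x : ℝ) (hx : 0 < x) :
    x ^ (-(3 / 2) : ℝ) = Real.sqrt ((x ^ 2)⁻¹ * x⁻¹) := by
  have h1 : ((x ^ 2)⁻¹ * x⁻¹ : ℝ) = x ^ ((-3 : ℝ)) := by
    rw [show ((-3 : ℝ)) = -((3 : ℕ) : ℝ) by norm_num, Real.rpow_neg hx.le,
      Real.rpow_natCast]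
    field_simp
  rw [h1, Real.sqrt_eq_rpow, ← Real.rpow_mul hx.le]
  norm_num

/-- For `B ∼ Binomial(n-1, p)` with `p ∈ (0,1]` and `n ≥ 1`,
`E[(1+B)^{-3/2}] ≤ √2 · (np)^{-3/2}`. -/
theorem binomial_neg_three_half_moment (n : ℕ) (hn : 1 ≤ n) (p : ℝ) (hp0 : 0 < p) (hp1 : p ≤ 1) :
    ∑ k ∈ Finset.range n,
        ((n - 1).choose k : ℝ) * p ^ k * (1 - p) ^ (n - 1 - k) * (1 + (k : ℝ)) ^ (-(3 / 2) : ℝ)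
      ≤ Real.sqrt 2 * ((n : ℝ) * p) ^ (-(3 / 2) : ℝ) := by
  have hq : (0:ℝ) ≤ 1 - p := by linarith
  have hnR : (0:ℝ) < (n : ℝ) := by exact_mod_cast hn
  have hnp : (0:ℝ) < (n : ℝ) * p := by positivity
  set w : ℕ → ℝ := fun k => ((n - 1).choose k : ℝ) * p ^ k * (1 - p) ^ (n - 1 - k) with hw
  have hwnn : ∀ k, 0 ≤ w k := fun k => by
    have : (0:ℝ) ≤ ((n-1).choose k : ℝ) := by positivity
    simp only [hw]; positivity
  -- binomial theorem
  have hbin : ∀ m : ℕ, ∑ j ∈ Finset.range (m+1), p ^ j * (1-p) ^ (m-j) * (m.choose j : ℝ) = 1 := by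
    intro m
    rw [← add_pow]
    norm_num
  -- cast identity 1 : n * C(n-1,k) = C(n,k+1) * (k+1)
  have hc1 : ∀ k : ℕ, (n : ℝ) * ((n-1).choose k : ℝ) = (n.choose (k+1) : ℝ) * (k+1) := by
    intro k
    have := Nat.add_one_mul_choose_eq (n-1) k
    rw [Nat.sub_add_cancel hn] at this
    exact_mod_cast this
  -- cast identity 2 : n*(n+1)*C(n-1,k) = C(n+1,k+2)*(k+1)*(k+2)
  have hc2 : ∀ k : ℕ, (n : ℝ) * (n+1) * ((n-1).choose k : ℝ)
      = ((n+1).choose (k+2) : ℝ) * ((k+1) * (k+2)) := by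
    intro k
    have h2 := Nat.add_one_mul_choose_eq n (k+1)
    have h2' : ((n:ℝ)+1) * (n.choose (k+1) : ℝ) = ((n+1).choose (k+2) : ℝ) * (k+2) := by
      exact_mod_cast h2
    calc (n : ℝ) * (n+1) * ((n-1).choose k : ℝ)
        = ((n:ℝ)+1) * ((n:ℝ) * ((n-1).choose k : ℝ)) := by ring
      _ = ((n:ℝ)+1) * ((n.choose (k+1) : ℝ) * (k+1)) := by rw [hc1]
      _ = (((n:ℝ)+1) * (n.choose (k+1) : ℝ)) * (k+1) := by ring
      _ = ((n+1).choose (k+2) : ℝ) * (k+2) * (k+1) := by rw [h2']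
      _ = ((n+1).choose (k+2) : ℝ) * ((k+1) * (k+2)) := by ring
  -- S1 bound
  have hS1 : ∑ k ∈ Finset.range n, w k * (1 + (k:ℝ))⁻¹ ≤ ((n:ℝ) * p)⁻¹ := by
    have hterm : ∀ k ∈ Finset.range n, w k * (1 + (k:ℝ))⁻¹
        = ((n:ℝ) * p)⁻¹ * (p ^ (k+1) * (1-p) ^ (n-(k+1)) * (n.choose (k+1) : ℝ)) := by
      intro k _
      have hk1 : (0:ℝ) < 1 + (k:ℝ) := by positivity
      have hsub : n - 1 - k = n - (k+1) := by omega
      simp only [hw, hsub]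
      have hck : ((n-1).choose k : ℝ) = (n.choose (k+1) : ℝ) * (1 + (k:ℝ)) / n := by
        have := hc1 k
        push_cast at this ⊢
        field_simp
        linarith [this]
      rw [hck]
      field_simp
      ring
    rw [Finset.sum_congr rfl hterm, ← Finset.mul_sum]
    have hle1 : ∑ k ∈ Finset.range n, p ^ (k+1) * (1-p) ^ (n-(k+1)) * (n.choose (k+1) : ℝ) ≤ 1 := by
      have := hbin n
      rw [Finset.sum_range_succ' (fun j => p ^ j * (1-p) ^ (n-j) * (n.choose j : ℝ)) n] at this
      have h0 : (0:ℝ) ≤ p ^ 0 * (1-p) ^ (n-0) * (n.choose 0 : ℝ) := by positivity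
      linarith [this]
    calc ((n:ℝ) * p)⁻¹ * ∑ k ∈ Finset.range n, p ^ (k+1) * (1-p) ^ (n-(k+1)) * (n.choose (k+1) : ℝ)
        ≤ ((n:ℝ) * p)⁻¹ * 1 := by
          apply mul_le_mul_of_nonneg_left hle1 (by positivity)
      _ = ((n:ℝ) * p)⁻¹ := by ring
  -- S2 bound
  have hS2 : ∑ k ∈ Finset.range n, w k * ((1 + (k:ℝ)) ^ 2)⁻¹ ≤ 2 * (((n:ℝ) * p) ^ 2)⁻¹ := by
    have hterm : ∀ k ∈ Finset.range n, w k * ((1 + (k:ℝ)) ^ 2)⁻¹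
        ≤ 2 * ((n:ℝ) * ((n:ℝ)+1) * p^2)⁻¹
            * (p ^ (k+2) * (1-p) ^ ((n+1)-(k+2)) * ((n+1).choose (k+2) : ℝ)) := by
      intro k _
      have hk1 : (0:ℝ) < 1 + (k:ℝ) := by positivity
      have hsub : (n+1) - (k+2) = n - 1 - k := by omega
      have heq : w k * (((1+(k:ℝ)) * ((k:ℝ)+2)))⁻¹
          = ((n:ℝ) * ((n:ℝ)+1) * p^2)⁻¹
            * (p ^ (k+2) * (1-p) ^ ((n+1)-(k+2)) * ((n+1).choose (k+2) : ℝ)) := by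
        simp only [hw, hsub]
        have hck : ((n-1).choose k : ℝ)
            = ((n+1).choose (k+2) : ℝ) * ((1+(k:ℝ)) * ((k:ℝ)+2)) / ((n:ℝ) * ((n:ℝ)+1)) := by
          have := hc2 k
          push_cast at this ⊢
          field_simp
          linarith [this]
        rw [hck]
        field_simp
        ring
      have hmono : ((1 + (k:ℝ)) ^ 2)⁻¹ ≤ 2 * (((1+(k:ℝ)) * ((k:ℝ)+2)))⁻¹ := by
        rw [show ((1 + (k:ℝ)) ^ 2)⁻¹ = 1/((1+(k:ℝ))^2) by rw [one_div],
          show (2:ℝ) * (((1+(k:ℝ)) * ((k:ℝ)+2)))⁻¹ = 2/((1+(k:ℝ))*((k:ℝ)+2)) by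
            rw [div_eq_mul_inv],
          div_le_div_iff₀ (by positivity) (by positivity)]
        nlinarith [hk1]
      calc w k * ((1 + (k:ℝ)) ^ 2)⁻¹ ≤ w k * (2 * (((1+(k:ℝ)) * ((k:ℝ)+2)))⁻¹) :=
            mul_le_mul_of_nonneg_left hmono (hwnn k)
        _ = 2 * (w k * (((1+(k:ℝ)) * ((k:ℝ)+2)))⁻¹) := by ring
        _ = 2 * (((n:ℝ) * ((n:ℝ)+1) * p^2)⁻¹
              * (p ^ (k+2) * (1-p) ^ ((n+1)-(k+2)) * ((n+1).choose (k+2) : ℝ))) := by rw [heq]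
        _ = 2 * ((n:ℝ) * ((n:ℝ)+1) * p^2)⁻¹
              * (p ^ (k+2) * (1-p) ^ ((n+1)-(k+2)) * ((n+1).choose (k+2) : ℝ)) := by ring
    have hsum2 : ∑ k ∈ Finset.range n,
        p ^ (k+2) * (1-p) ^ ((n+1)-(k+2)) * ((n+1).choose (k+2) : ℝ) ≤ 1 := by
      have := hbin (n+1)
      rw [Finset.sum_range_succ' (fun j => p ^ j * (1-p) ^ ((n+1)-j) * ((n+1).choose j : ℝ)) (n+1)]
        at this
      rw [Finset.sum_range_succ'
        (fun j => p ^ (j+1) * (1-p) ^ ((n+1)-(j+1)) * ((n+1).choose (j+1) : ℝ)) n] at this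
      have h0 : (0:ℝ) ≤ p ^ 0 * (1-p) ^ (n+1-0) * ((n+1).choose 0 : ℝ) := by positivity
      have h1 : (0:ℝ) ≤ p ^ (0+1) * (1-p) ^ ((n+1)-(0+1)) * ((n+1).choose (0+1) : ℝ) := by
        positivity
      norm_num at this
      have hre : ∑ k ∈ Finset.range n,
            p ^ (k+1+1) * (1-p) ^ (n+1-(k+1+1)) * ((n+1).choose (k+1+1) : ℝ)
          = ∑ k ∈ Finset.range n,
            p ^ (k+2) * (1-p) ^ ((n+1)-(k+2)) * ((n+1).choose (k+2) : ℝ) := by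
        apply Finset.sum_congr rfl; intro k _; norm_num
      rw [hre] at this
      have h2 : (0:ℝ) ≤ p * (1-p)^n * ((n:ℝ)+1) := by positivity
      have h3 : (0:ℝ) ≤ (1-p)^(n+1) := by positivity
      linarith [this]
    calc ∑ k ∈ Finset.range n, w k * ((1 + (k:ℝ)) ^ 2)⁻¹
        ≤ ∑ k ∈ Finset.range n, 2 * ((n:ℝ) * ((n:ℝ)+1) * p^2)⁻¹
            * (p ^ (k+2) * (1-p) ^ ((n+1)-(k+2)) * ((n+1).choose (k+2) : ℝ)) :=
          Finset.sum_le_sum hterm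
      _ = 2 * ((n:ℝ) * ((n:ℝ)+1) * p^2)⁻¹
            * ∑ k ∈ Finset.range n, p ^ (k+2) * (1-p) ^ ((n+1)-(k+2)) * ((n+1).choose (k+2) : ℝ) :=
          by rw [Finset.mul_sum]
      _ ≤ 2 * ((n:ℝ) * ((n:ℝ)+1) * p^2)⁻¹ * 1 :=
          mul_le_mul_of_nonneg_left hsum2 (by positivity)
      _ ≤ 2 * (((n:ℝ) * p) ^ 2)⁻¹ := by
          rw [mul_one]
          have h1 : ((n:ℝ) * p) ^ 2 ≤ (n:ℝ) * ((n:ℝ)+1) * p^2 := by nlinarith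
          have h2 := inv_anti₀ (by positivity : (0:ℝ) < ((n:ℝ)*p)^2) h1
          linarith
  -- Cauchy–Schwarz step
  set S := ∑ k ∈ Finset.range n, w k * (1 + (k:ℝ)) ^ (-(3 / 2) : ℝ) with hS
  have hSform : S = ∑ k ∈ Finset.range n,
      Real.sqrt (w k * ((1 + (k:ℝ)) ^ 2)⁻¹) * Real.sqrt (w k * (1 + (k:ℝ))⁻¹) := by
    apply Finset.sum_congr rfl
    intro k _
    have hk1 : (0:ℝ) < 1 + (k:ℝ) := by positivity
    rw [← Real.sqrt_mul (mul_nonneg (hwnn k) (by positivity))]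
    have hre : w k * ((1+(k:ℝ))^2)⁻¹ * (w k * (1+(k:ℝ))⁻¹)
        = w k^2 * (((1+(k:ℝ))^2)⁻¹ * (1+(k:ℝ))⁻¹) := by ring
    rw [hre, Real.sqrt_mul (by positivity), Real.sqrt_sq (hwnn k),
      ← bnm_rpow_neg_three_half _ hk1]
  have hSnn : 0 ≤ S := by
    apply Finset.sum_nonneg
    intro k _
    exact mul_nonneg (hwnn k) (Real.rpow_nonneg (by positivity) _)
  have hCS := Finset.sum_mul_sq_le_sq_mul_sq (Finset.range n)
    (fun k => Real.sqrt (w k * ((1 + (k:ℝ)) ^ 2)⁻¹))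
    (fun k => Real.sqrt (w k * (1 + (k:ℝ))⁻¹))
  have hA : ∑ k ∈ Finset.range n, (Real.sqrt (w k * ((1 + (k:ℝ)) ^ 2)⁻¹))^2
      = ∑ k ∈ Finset.range n, w k * ((1 + (k:ℝ)) ^ 2)⁻¹ :=
    Finset.sum_congr rfl fun k _ => Real.sq_sqrt (mul_nonneg (hwnn k) (by positivity))
  have hB : ∑ k ∈ Finset.range n, (Real.sqrt (w k * (1 + (k:ℝ))⁻¹))^2
      = ∑ k ∈ Finset.range n, w k * (1 + (k:ℝ))⁻¹ :=
    Finset.sum_congr rfl fun k _ => Real.sq_sqrt (mul_nonneg (hwnn k) (by positivity))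
  rw [← hSform, hA, hB] at hCS
  have hS1nn : 0 ≤ ∑ k ∈ Finset.range n, w k * (1 + (k:ℝ))⁻¹ :=
    Finset.sum_nonneg fun k _ => mul_nonneg (hwnn k) (by positivity)
  have hbound : S ^ 2 ≤ 2 * ((((n:ℝ)*p) ^ 2)⁻¹ * ((n:ℝ)*p)⁻¹) := by
    calc S ^ 2 ≤ (∑ k ∈ Finset.range n, w k * ((1 + (k:ℝ)) ^ 2)⁻¹)
          * ∑ k ∈ Finset.range n, w k * (1 + (k:ℝ))⁻¹ := hCS
      _ ≤ (2 * (((n:ℝ) * p) ^ 2)⁻¹) * (((n:ℝ) * p)⁻¹) := by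
          apply mul_le_mul hS2 hS1 hS1nn (by positivity)
      _ = 2 * ((((n:ℝ)*p) ^ 2)⁻¹ * ((n:ℝ)*p)⁻¹) := by ring
  have hRHS : Real.sqrt 2 * ((n:ℝ) * p) ^ (-(3 / 2) : ℝ)
      = Real.sqrt (2 * ((((n:ℝ)*p) ^ 2)⁻¹ * ((n:ℝ)*p)⁻¹)) := by
    rw [bnm_rpow_neg_three_half _ hnp, ← Real.sqrt_mul (by norm_num)]
  rw [hRHS]
  exact (Real.le_sqrt hSnn (by positivity)).mpr hbound
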